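/- arXiv:2108.13720 — 3 statements merged into one kernel-verified Lean document; each statement's English description precedes it below -/
import Mathlib

section
/- The Euclidean distance matrix of any collection of N points in ℝ^K has rank at most K + 2. -/
open Matrix

/-- Squared Euclidean distance between two vectors in `Fin K → ℝ`. -/
noncomputable def sqDist {K : ℕ} (x y : Fin K → ℝ) : ℝ :=
  ‖(WithLp.equiv 2 (Fin K → ℝ)).symm (x - y)‖ ^ 2

lemma sqDist_eq {K : ℕ} (x y : Fin K → ℝ) : sqDist x y = ∑ i, (x i - y i) ^ 2 := by
  have h : (0:ℝ) ≤ ∑ i, (x i - y i) ^ 2 := by positivity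
  simp [sqDist, EuclideanSpace.norm_eq, Real.sq_sqrt, sq_abs,
    Real.sq_sqrt (by positivity : (0:ℝ) ≤ ∑ i, |x i - y i| ^ 2)]
  exact Real.sq_sqrt h

lemma rank_add_le' {m n : Type*} [Fintype m] [Fintype n] (A B : Matrix m n ℝ) :
    (A + B).rank ≤ A.rank + B.rank := by
  classical
  have h : LinearMap.range (A + B).mulVecLin ≤
      LinearMap.range A.mulVecLin ⊔ LinearMap.range B.mulVecLin := by
    rintro x ⟨v, rfl⟩
    rw [Matrix.mulVecLin_add]
    exact Submodule.add_mem_sup ⟨v, rfl⟩ ⟨v, rfl⟩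
  exact (Submodule.finrank_mono h).trans
    (Submodule.finrank_add_le_finrank_add_finrank _ _)

lemma rank_smul_le' {m n : Type*} [Fintype m] [Fintype n] (c : ℝ) (A : Matrix m n ℝ) :
    (c • A).rank ≤ A.rank := by
  classical
  refine Submodule.finrank_mono ?_
  rintro x ⟨v, rfl⟩
  refine ⟨c • v, ?_⟩
  simp [Matrix.mulVecLin, Matrix.mulVec_smul, Matrix.smul_mulVec]

lemma rank_vecMulVec_le' {m n : Type*} [Fintype m] [Fintype n] (w : m → ℝ) (v : n → ℝ) :
    (Matrix.vecMulVec w v).rank ≤ 1 := by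
  rw [Matrix.vecMulVec_eq Unit]
  calc (Matrix.replicateCol Unit w * Matrix.replicateRow Unit v).rank ≤ (Matrix.replicateCol Unit w).rank :=
        Matrix.rank_mul_le_left _ _
    _ ≤ Fintype.card Unit := Matrix.rank_le_card_width _
    _ = 1 := rfl

/-- the Euclidean distance matrix of `N` points in `ℝ^K` has rank at most
`K + 2`. -/
theorem edm_rank_le {N K : ℕ} (P : Matrix (Fin N) (Fin K) ℝ)
    (D : Matrix (Fin N) (Fin N) ℝ) (hD : ∀ u v, D u v = sqDist (P u) (P v)) :
    D.rank ≤ K + 2 := by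
  set s : Fin N → ℝ := fun u => ∑ i, (P u i) ^ 2 with hs
  have hDeq : D = vecMulVec s 1 + vecMulVec 1 s + (-2 : ℝ) • (P * Pᵀ) := by
    ext u v
    rw [hD, sqDist_eq]
    have h : ∀ i, (P u i - P v i) ^ 2
        = P u i ^ 2 + P v i ^ 2 + (-2) * (P u i * P v i) := by intro i; ring
    simp only [h, Finset.sum_add_distrib, Matrix.add_apply, Matrix.smul_apply,
      vecMulVec_apply, Matrix.mul_apply, Matrix.transpose_apply, Pi.one_apply, hs,
      smul_eq_mul, Finset.mul_sum, one_mul]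
    ring
  rw [hDeq]
  calc (vecMulVec s 1 + vecMulVec 1 s + (-2 : ℝ) • (P * Pᵀ)).rank
      ≤ (vecMulVec s 1 + vecMulVec 1 s).rank + ((-2 : ℝ) • (P * Pᵀ)).rank :=
        rank_add_le' _ _
    _ ≤ ((vecMulVec s (1 : Fin N → ℝ)).rank + (vecMulVec (1 : Fin N → ℝ) s).rank)
        + ((-2 : ℝ) • (P * Pᵀ)).rank := by
        exact Nat.add_le_add_right (rank_add_le' _ _) _
    _ ≤ (1 + 1) + (P * Pᵀ).rank := by
        gcongr
        · exact rank_vecMulVec_le' _ _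
        · exact rank_vecMulVec_le' _ _
        · exact rank_smul_le' _ _
    _ ≤ (1 + 1) + K := by
        have hPP : (P * Pᵀ).rank ≤ K := (Matrix.rank_mul_le_left P Pᵀ).trans
          (by simpa using Matrix.rank_le_card_width P)
        exact Nat.add_le_add_left hPP _
    _ = K + 2 := by ring
end

section
/- Let p_u, p_ũ, p_v ∈ ℝ³ be three affinely independent points and let Π be the plane (affine subspace) they span. If two points q₁, q₂ ∈ ℝ³ satisfy ‖q_i - p_u‖ = d₁, ‖q_i - p_ũ‖ = d₂, ‖q_i - p_v‖ = d₃ for i = 1, 2 (the same three distances), then either q₁ = q₂ or q₂ is the reflection of q₁ across the plane Π. -/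
/-- if two points of `ℝ³` have the same distances to three affinely
independent points, then they are equal or related by reflection across the plane
spanned by the three points. -/
theorem reflection_ambiguity (pu put pv q₁ q₂ : EuclideanSpace ℝ (Fin 3))
    (d₁ d₂ d₃ : ℝ)
    (hind : AffineIndependent ℝ ![pu, put, pv])
    (h1 : dist q₁ pu = d₁) (h2 : dist q₁ put = d₂) (h3 : dist q₁ pv = d₃)
    (h1' : dist q₂ pu = d₁) (h2' : dist q₂ put = d₂) (h3' : dist q₂ pv = d₃) :
    letI : Nonempty (affineSpan ℝ ({pu, put, pv} : Set (EuclideanSpace ℝ (Fin 3)))) :=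
      ⟨⟨pu, mem_affineSpan ℝ (by simp)⟩⟩
    q₂ = q₁ ∨
      q₂ = EuclideanGeometry.reflection
        (affineSpan ℝ ({pu, put, pv} : Set (EuclideanSpace ℝ (Fin 3)))) q₁ := by
  show _ ∨ _
  by_cases hq : q₂ = q₁
  · exact Or.inl hq
  right
  set s := affineSpan ℝ ({pu, put, pv} : Set (EuclideanSpace ℝ (Fin 3))) with hs
  set H := AffineSubspace.perpBisector q₁ q₂ with hH
  have hne : q₂ -ᵥ q₁ ≠ 0 := fun h => hq (by simpa using vsub_eq_zero_iff_eq.mp h)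
  -- the anchors are in the perpendicular bisector
  have hmem : ∀ p : EuclideanSpace ℝ (Fin 3), dist q₁ p = dist q₂ p → p ∈ H := by
    intro p hp
    rw [AffineSubspace.mem_perpBisector_iff_dist_eq]
    rw [dist_comm p q₁, dist_comm p q₂]
    exact hp
  have hpu : pu ∈ H := hmem pu (h1.trans h1'.symm)
  have hput : put ∈ H := hmem put (h2.trans h2'.symm)
  have hpv : pv ∈ H := hmem pv (h3.trans h3'.symm)
  have hsH : s ≤ H := by
    rw [hs]
    apply affineSpan_le.mpr
    intro x hx
    rcases hx with rfl | rfl | rfl <;> assumption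
  -- finrank computations
  have hrange : Set.range ![pu, put, pv] = ({pu, put, pv} : Set (EuclideanSpace ℝ (Fin 3))) := by
    simp [Fin.range_fin_succ, Matrix.range_cons, Matrix.range_empty]
  have hdims : Module.finrank ℝ s.direction = 2 := by
    rw [hs, direction_affineSpan, ← hrange]
    exact hind.finrank_vectorSpan (by simp)
  have hdimH : Module.finrank ℝ H.direction = 2 := by
    rw [hH, AffineSubspace.direction_perpBisector]
    have h1 : Module.finrank ℝ (ℝ ∙ (q₂ -ᵥ q₁)) = 1 := finrank_span_singleton hne
    have := Submodule.finrank_add_finrank_orthogonal (K := ℝ ∙ (q₂ -ᵥ q₁))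
    rw [h1, finrank_euclideanSpace_fin] at this
    omega
  have hdir : s.direction = H.direction :=
    Submodule.eq_of_le_of_finrank_eq (AffineSubspace.direction_le hsH) (by rw [hdims, hdimH])
  have hseq : s = H :=
    AffineSubspace.ext_of_direction_eq hdir ⟨pu, mem_affineSpan ℝ (by simp), hpu⟩
  haveI : Nonempty H := ⟨⟨pu, hpu⟩⟩
  -- compute the reflection across H
  have hproj : (EuclideanGeometry.orthogonalProjection H q₁ : EuclideanSpace ℝ (Fin 3))
      = midpoint ℝ q₁ q₂ := by
    have hmid : midpoint ℝ q₁ q₂ ∈ (H : Set (EuclideanSpace ℝ (Fin 3))) ∩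
        AffineSubspace.mk' q₁ H.directionᗮ := by
      constructor
      · exact AffineSubspace.midpoint_mem_perpBisector q₁ q₂
      · rw [AffineSubspace.mem_coe, AffineSubspace.mem_mk']
        rw [hH, AffineSubspace.direction_perpBisector, Submodule.orthogonal_orthogonal]
        rw [midpoint_vsub_left]
        exact Submodule.smul_mem _ _ (Submodule.mem_span_singleton_self _)
    rw [EuclideanGeometry.inter_eq_singleton_orthogonalProjection q₁] at hmid
    exact hmid.symm
  have hrefl : EuclideanGeometry.reflection H q₁ = q₂ := by
    rw [EuclideanGeometry.reflection_apply', hproj]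
    have : midpoint ℝ q₁ q₂ -ᵥ q₁ = q₂ -ᵥ midpoint ℝ q₁ q₂ := by
      rw [midpoint_vsub_left, right_vsub_midpoint]
    rw [this, vsub_vadd]
  rw [show (EuclideanGeometry.reflection s q₁ : EuclideanSpace ℝ (Fin 3))
      = EuclideanGeometry.reflection H q₁ from
    EuclideanGeometry.eq_reflection_of_eq_subspace hseq q₁, hrefl]
end

section
/- Let P ∈ ℝ^{N×K} have full column rank and Z ∈ ℝ^{N×K}. Then the Sylvester equation C(PᵀP) + (PᵀP)C = PᵀZ - ZᵀP has a unique solution C, this C is skew-symmetric, and Z - PC lies in the horizontal space H_P = {W : WᵀP = PᵀW}. -/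
open Matrix

private lemma trace_tm_nonneg {m k : ℕ} (M : Matrix (Fin m) (Fin k) ℝ) : 0 ≤ trace (Mᵀ * M) := by
  simp only [trace, diag, mul_apply, transpose_apply]
  exact Finset.sum_nonneg fun j _ => Finset.sum_nonneg fun i _ => mul_self_nonneg _

private lemma eq_zero_of_trace_tm {m k : ℕ} (M : Matrix (Fin m) (Fin k) ℝ)
    (h : trace (Mᵀ * M) = 0) : M = 0 := by
  simp only [trace, diag, mul_apply, transpose_apply] at h
  ext i j
  have h1 := (Finset.sum_eq_zero_iff_of_nonneg
    (fun x _ => Finset.sum_nonneg fun y _ => mul_self_nonneg _)).mp h j (Finset.mem_univ _)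
  have h2 := (Finset.sum_eq_zero_iff_of_nonneg
    (fun y _ => mul_self_nonneg _)).mp h1 i (Finset.mem_univ _)
  simpa [mul_self_eq_zero] using h2

private lemma posdef_aux {N K : ℕ} (P : Matrix (Fin N) (Fin K) ℝ) (hP : P.rank = K) :
    (Pᵀ * P).PosDef := by
  have hinj : Function.Injective P.mulVecLin := by
    rw [← LinearMap.ker_eq_bot]
    have h1 := P.mulVecLin.finrank_range_add_finrank_ker
    rw [show Module.finrank ℝ (LinearMap.range P.mulVecLin) = K from hP] at h1
    simp at h1
    exact h1
  refine PosDef.of_dotProduct_mulVec_pos ?_ ?_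
  · unfold Matrix.IsHermitian
    rw [conjTranspose_eq_transpose_of_trivial, transpose_mul, transpose_transpose]
  · intro x hx
    have hPx : P *ᵥ x ≠ 0 := fun h =>
      hx (by simpa using hinj (show P.mulVecLin x = P.mulVecLin 0 by simpa using h))
    simp only [star_trivial]
    rw [← mulVec_mulVec, dotProduct_mulVec, vecMul_transpose]
    have h0 : (P *ᵥ x) ⬝ᵥ (P *ᵥ x) ≠ 0 := fun h => hPx (dotProduct_self_eq_zero.mp h)
    have h1 : 0 ≤ (P *ᵥ x) ⬝ᵥ (P *ᵥ x) := by
      simpa using dotProduct_self_star_nonneg (P *ᵥ x)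
    exact lt_of_le_of_ne h1 (Ne.symm h0)

open scoped MatrixOrder in
/-- injectivity of the Lyapunov operator for posdef A -/
private lemma lyap_inj {K : ℕ} {A : Matrix (Fin K) (Fin K) ℝ} (hA : A.PosDef)
    (C : Matrix (Fin K) (Fin K) ℝ) (h : C * A + A * C = 0) : C = 0 := by
  set S := CFC.sqrt A with hSdef
  have hSS : S * S = A := CFC.sqrt_mul_sqrt_self A hA.posSemidef.nonneg
  have hSsym : Sᵀ = S := by
    have := (CFC.sqrt_nonneg A).posSemidef.1
    rwa [Matrix.IsHermitian, conjTranspose_eq_transpose_of_trivial] at this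
  have hdetS : IsUnit S.det := by
    have hdA : 0 < A.det := hA.det_pos
    rw [← hSS, det_mul] at hdA
    exact isUnit_iff_ne_zero.mpr (fun h0 => by simp [h0] at hdA)
  -- trace identity
  have htr : trace ((C * S)ᵀ * (C * S)) + trace ((S * C)ᵀ * (S * C)) = 0 := by
    have e1 : (C * S)ᵀ * (C * S) = Sᵀ * (Cᵀ * (C * S)) := by
      rw [transpose_mul]; noncomm_ring
    have e2 : trace ((C * S)ᵀ * (C * S)) = trace (Cᵀ * (C * A)) := by
      rw [e1, trace_mul_comm, hSsym]
      congr 1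
      rw [← hSS]; noncomm_ring
    have e3 : trace ((S * C)ᵀ * (S * C)) = trace (Cᵀ * (A * C)) := by
      rw [transpose_mul, hSsym]
      congr 1
      rw [← hSS]; noncomm_ring
    rw [e2, e3, ← trace_add, ← Matrix.mul_add, h, Matrix.mul_zero, trace_zero]
  have h1 := trace_tm_nonneg (C * S)
  have h2 := trace_tm_nonneg (S * C)
  have hCS : C * S = 0 := eq_zero_of_trace_tm _ (by linarith)
  have := congrArg (· * S⁻¹) hCS
  simpa [Matrix.mul_assoc, Matrix.mul_nonsing_inv S hdetS] using this

/-- for full-column-rank `P`, the Sylvester equation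
`C(PᵀP) + (PᵀP)C = PᵀZ - ZᵀP` has a unique solution `C`; this `C` is skew-symmetric,
and `Z - PC` lies in the horizontal space `{W : WᵀP = PᵀW}`. -/
theorem sylvester_horizontal_projection {N K : ℕ}
    (P : Matrix (Fin N) (Fin K) ℝ) (hP : P.rank = K)
    (Z : Matrix (Fin N) (Fin K) ℝ) :
    (∃! C : Matrix (Fin K) (Fin K) ℝ,
        C * (Pᵀ * P) + (Pᵀ * P) * C = Pᵀ * Z - Zᵀ * P) ∧
    ∀ C : Matrix (Fin K) (Fin K) ℝ,
      C * (Pᵀ * P) + (Pᵀ * P) * C = Pᵀ * Z - Zᵀ * P →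
      Cᵀ = -C ∧ (Z - P * C)ᵀ * P = Pᵀ * (Z - P * C) := by
  set A := Pᵀ * P with hAdef
  have hA : A.PosDef := posdef_aux P hP
  have hAsym : Aᵀ = A := by rw [hAdef, transpose_mul, transpose_transpose]
  clear_value A
  -- the Lyapunov linear map
  let L : Matrix (Fin K) (Fin K) ℝ →ₗ[ℝ] Matrix (Fin K) (Fin K) ℝ :=
    { toFun := fun C => C * A + A * C
      map_add' := fun x y => by noncomm_ring
      map_smul' := fun c x => by simp [Matrix.smul_mul, Matrix.mul_smul, smul_add] }
  have hLinj : Function.Injective L := by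
    rw [← LinearMap.ker_eq_bot, LinearMap.ker_eq_bot']
    intro C hC
    exact lyap_inj hA C hC
  have hLsurj : Function.Surjective L := LinearMap.injective_iff_surjective.mp hLinj
  obtain ⟨C₀, hC₀⟩ := hLsurj (Pᵀ * Z - Zᵀ * P)
  constructor
  · exact ⟨C₀, hC₀, fun C hC => hLinj (hC.trans hC₀.symm)⟩
  · intro C hC
    have hskew : Cᵀ = -C := by
      have htrans : Cᵀ * A + A * Cᵀ = -(Pᵀ * Z - Zᵀ * P) := by
        have := congrArg transpose hC
        rw [transpose_add, transpose_mul, transpose_mul, hAsym, transpose_sub,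
          transpose_mul, transpose_mul, transpose_transpose, transpose_transpose] at this
        rw [add_comm] at this
        rw [this]
        noncomm_ring
      have hsum : (C + Cᵀ) * A + A * (C + Cᵀ) = 0 := by
        rw [Matrix.add_mul, Matrix.mul_add]
        have : C * A + Cᵀ * A + (A * C + A * Cᵀ)
            = (C * A + A * C) + (Cᵀ * A + A * Cᵀ) := by abel
        rw [this, hC, htrans]
        simp
      have := lyap_inj hA _ hsum
      linear_combination (norm := noncomm_ring) this
    refine ⟨hskew, ?_⟩
    have hCA : C * A = Pᵀ * Z - Zᵀ * P - A * C := eq_sub_of_add_eq hC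
    calc (Z - P * C)ᵀ * P = Zᵀ * P - Cᵀ * Pᵀ * P := by
          rw [transpose_sub, transpose_mul, Matrix.sub_mul]
      _ = Zᵀ * P + C * A := by
          rw [hskew, hAdef, Matrix.neg_mul, Matrix.neg_mul, Matrix.mul_assoc, sub_neg_eq_add]
      _ = Zᵀ * P + (Pᵀ * Z - Zᵀ * P - A * C) := by rw [hCA]
      _ = Pᵀ * Z - A * C := by abel
      _ = Pᵀ * (Z - P * C) := by rw [Matrix.mul_sub, hAdef, Matrix.mul_assoc]
end
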